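/- Let M be a regular matroid realized by a totally unimodular matrix A, and let O : E → {-1,+1} be an orientation that can be transformed into an orientation O' by a finite sequence of compatible signed circuit reversals (at each step, reverse the signs of O on the support of a signed circuit compatible with the current orientation). Then O can be transformed into O' by reversing a collection of signed circuits with pairwise disjoint supports, each of which is compatible with O. -/

import Mathlib

open scoped Classical

open Matrix

/-- The support of a vector. -/
def supp {α : Type*} (v : α → ℝ) : Set α := {x | v x ≠ 0}

/-- A vector is simple if all entries lie in `{-1,0,1}`. -/
def Simple {α : Type*} (v : α → ℝ) : Prop := ∀ x, v x = -1 ∨ v x = 0 ∨ v x = 1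

/-- A signed circuit of the regular matroid realized by `A`: a simple kernel vector
with support minimal among supports of nonzero kernel vectors. -/
def SignedCircuit {m E : Type*} [Fintype E] (A : Matrix m E ℝ) (C : E → ℝ) : Prop :=
  A.mulVec C = 0 ∧ C ≠ 0 ∧ Simple C ∧
    ∀ D : E → ℝ, A.mulVec D = 0 → D ≠ 0 → supp D ⊆ supp C → supp D = supp C

/-- A signed cocircuit: a simple row-space vector with support minimal among
supports of nonzero row-space vectors. -/
def SignedCocircuit {m E : Type*} [Fintype m] (A : Matrix m E ℝ) (C : E → ℝ) : Prop :=
  (∃ y, Matrix.vecMul y A = C) ∧ C ≠ 0 ∧ Simple C ∧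
    ∀ D : E → ℝ, (∃ y, Matrix.vecMul y A = D) → D ≠ 0 → supp D ⊆ supp C → supp D = supp C

lemma exists_invertible_rows {m ι : Type*} [Fintype m] [Fintype ι] [DecidableEq ι]
    (V : Matrix m ι ℝ) (h : LinearIndependent ℝ (fun j i => V i j)) :
    ∃ r : ι → m, Function.Injective r ∧ IsUnit (V.submatrix r id) := by
  -- rank of V is card ι
  have hVt : LinearIndependent ℝ (fun j => Vᵀ j) := h
  have hrankT : Vᵀ.rank = Fintype.card ι := hVt.rank_matrix
  have hrank : V.rank = Fintype.card ι := by rw [← Matrix.rank_transpose]; exact hrankT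
  -- rows of V span everything
  have hspan : Submodule.span ℝ (Set.range V) = ⊤ := by
    apply Submodule.eq_top_of_finrank_eq
    rw [show Set.range V = Set.range V.row from rfl, ← Matrix.rank_eq_finrank_span_row, hrank, Module.finrank_pi]
  obtain ⟨t, hts, htspan, htind⟩ := exists_linearIndependent ℝ (Set.range V)
  rw [hspan] at htspan
  have htfin : t.Finite := (Set.finite_range V).subset hts
  have : Fintype t := htfin.fintype
  -- t is a basis
  have hb : Nonempty (Module.Basis t ℝ (ι → ℝ)) := ⟨Module.Basis.mk htind (by rw [Subtype.range_coe, htspan])⟩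
  obtain ⟨b⟩ := hb
  have hcard : Fintype.card ι = Fintype.card t := by
    rw [← Module.finrank_eq_card_basis b, Module.finrank_pi]
  let e : ι ≃ t := Fintype.equivOfCardEq hcard
  have hg : ∀ u : t, ∃ i : m, V i = (u : ι → ℝ) := fun u => hts u.2
  choose g hgspec using hg
  refine ⟨fun i => g (e i), ?_, ?_⟩
  · intro i j hij
    apply e.injective
    apply Subtype.ext
    rw [← hgspec (e i), ← hgspec (e j)]
    simp only at hij
    rw [hij]
  · rw [← Matrix.linearIndependent_rows_iff_isUnit]
    have : (fun i => (V.submatrix (fun i => g (e i)) id) i) = fun i => ((e i : ι → ℝ)) := by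
      funext i; rw [← hgspec (e i)]; rfl
    show LinearIndependent ℝ (fun i => (V.submatrix (fun i => g (e i)) id) i)
    rw [this]
    exact htind.comp e e.injective

/-- Cramer + total unimodularity: if the square submatrix on rows `r`, columns `Tf` is
invertible and `c` solves `N c = -column x0`, then `c` has entries in `{-1,0,1}`. -/
lemma cramer_tu {m E : Type*} [Fintype m] [Fintype E] (A : Matrix m E ℝ)
    (hA : A.IsTotallyUnimodular) (Tf : Finset E) [DecidableEq ↥Tf] (x0 : E) (r : ↥Tf → m)
    (hrunit : IsUnit (A.submatrix r (fun x : ↥Tf => (x : E))))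
    (c : ↥Tf → ℝ)
    (hNc : (A.submatrix r (fun x : ↥Tf => (x : E))).mulVec c = fun i => -(A (r i) x0)) :
    ∀ j, c j = 0 ∨ c j = 1 ∨ c j = -1 := by
  intro j
  have hdetne : (A.submatrix r (fun x : ↥Tf => (x : E))).det ≠ 0 :=
    ((Matrix.isUnit_iff_isUnit_det _).mp hrunit).ne_zero
  have hdetN : (A.submatrix r (fun x : ↥Tf => (x : E))).det = 1 ∨
      (A.submatrix r (fun x : ↥Tf => (x : E))).det = -1 := by
    obtain ⟨s, hs⟩ := (Matrix.isTotallyUnimodular_iff_fintype A).mp hA ↥Tf r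
      (fun x : ↥Tf => (x : E))
    rcases s with s | s | s <;> simp at hs <;>
      first
        | exact absurd hs hdetne | exact absurd hs.symm hdetne
        | exact Or.inl hs | exact Or.inl hs.symm
        | exact Or.inr hs | exact Or.inr hs.symm
  have hcram : ∀ j', (A.submatrix r (fun x : ↥Tf => (x : E))).det * c j'
      = ((A.submatrix r (fun x : ↥Tf => (x : E))).updateCol j'
          (fun i => -(A (r i) x0))).det := by
    have h1 : (A.submatrix r (fun x : ↥Tf => (x : E))).mulVec
        (Matrix.cramer (A.submatrix r (fun x : ↥Tf => (x : E))) (fun i => -(A (r i) x0)))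
        = (A.submatrix r (fun x : ↥Tf => (x : E))).mulVec
          ((A.submatrix r (fun x : ↥Tf => (x : E))).det • c) := by
      rw [Matrix.mulVec_cramer, Matrix.mulVec_smul, hNc]
    have h3 := Matrix.mulVec_injective_iff_isUnit.mpr hrunit h1
    intro j'
    have h4 := congrFun h3 j'
    rw [Matrix.cramer_apply] at h4
    simpa [mul_comm] using h4.symm
  have hdet2 : ((A.submatrix r (fun x : ↥Tf => (x : E))).updateCol j
        (fun i => -(A (r i) x0))).det
      = (-1 : ℝ) * ((A.submatrix r (fun x : ↥Tf => (x : E))).updateCol j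
        (fun i => A (r i) x0)).det := by
    have hbneg : (fun i : ↥Tf => -(A (r i) x0)) = (-1 : ℝ) • (fun i => A (r i) x0) := by
      funext i; simp
    rw [hbneg, Matrix.det_updateCol_smul]
  have hsub : (A.submatrix r (fun x : ↥Tf => (x : E))).updateCol j
        (fun i => A (r i) x0)
      = A.submatrix r (fun j' : ↥Tf => if j' = j then x0 else (j' : E)) := by
    ext i j'
    rw [Matrix.updateCol_apply]
    by_cases h : j' = j <;> simp [h]
  obtain ⟨s, hs⟩ := (Matrix.isTotallyUnimodular_iff_fintype A).mp hA ↥Tf r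
    (fun j' : ↥Tf => if j' = j then x0 else (j' : E))
  have hcj : (A.submatrix r (fun x : ↥Tf => (x : E))).det * c j = (-1 : ℝ) * (s : ℝ) := by
    rw [hcram j, hdet2, hsub, hs]
  rcases hdetN with hd | hd <;> rw [hd] at hcj <;> rcases s with s | s | s <;>
    simp at hcj <;>
    first
      | (left; linarith) | (right; left; linarith) | (right; right; linarith)

lemma simple_of_minimal {m E : Type*} [Fintype m] [Fintype E] (A : Matrix m E ℝ)
    (hA : A.IsTotallyUnimodular) (D : E → ℝ) (hker : A.mulVec D = 0)
    (hmin : ∀ u : E → ℝ, A.mulVec u = 0 → u ≠ 0 → supp u ⊆ supp D → supp u = supp D)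
    (x0 : E) (hx0 : D x0 ≠ 0) :
    Simple ((D x0)⁻¹ • D) := by
  have hprop : ∀ u : E → ℝ, A.mulVec u = 0 → supp u ⊆ supp D → u x0 = 0 → u = 0 := by
    intro u hu hsupp hux0
    by_contra hne
    have h1 : supp u = supp D := hmin u hu hne hsupp
    have : x0 ∈ supp u := h1 ▸ hx0
    exact this hux0
  obtain ⟨Sf, hSf⟩ : ∃ Sf : Finset E, Sf = Finset.univ.filter (fun x => D x ≠ 0) := ⟨_, rfl⟩
  have hmemS : ∀ y, y ∈ Sf ↔ D y ≠ 0 := by intro y; simp [hSf]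
  have hx0S : x0 ∈ Sf := (hmemS x0).mpr hx0
  obtain ⟨Tf, hTf⟩ : ∃ Tf : Finset E, Tf = Sf.erase x0 := ⟨_, rfl⟩
  have hmemT : ∀ y, y ∈ Tf ↔ (y ≠ x0 ∧ D y ≠ 0) := by
    intro y; rw [hTf, Finset.mem_erase, hmemS]
  have hx0T : x0 ∉ Tf := by rw [hmemT]; tauto
  have hind : LinearIndependent ℝ
      (fun (j : ↥Tf) i => (Matrix.of (fun i (x : ↥Tf) => A i (x : E))) i j) := by
    rw [Fintype.linearIndependent_iff]
    intro g hg j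
    have huker : A.mulVec (fun y => if h : y ∈ Tf then g ⟨y, h⟩ else 0) = 0 := by
      funext i
      have hthis := congrFun hg i
      simp only [Finset.sum_apply, Pi.smul_apply, Pi.zero_apply, smul_eq_mul] at hthis
      show ∑ x : E, A i x * (if h : x ∈ Tf then g ⟨x, h⟩ else 0) = 0
      calc ∑ x : E, A i x * (if h : x ∈ Tf then g ⟨x, h⟩ else 0)
          = ∑ x ∈ Tf, A i x * (if h : x ∈ Tf then g ⟨x, h⟩ else 0) := by
            refine (Finset.sum_subset (Finset.subset_univ _) ?_).symm
            intro y _ hy; simp [hy]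
        _ = ∑ x : ↥Tf, A i (x : E) * (if h : (x : E) ∈ Tf then g ⟨(x : E), h⟩ else 0) :=
            (Finset.sum_coe_sort Tf _).symm
        _ = ∑ x : ↥Tf, g x * (Matrix.of (fun i (x : ↥Tf) => A i (x : E))) i x := by
            refine Finset.sum_congr rfl fun x _ => ?_
            simp [x.2, mul_comm]
        _ = 0 := hthis
    have husupp : supp (fun y => if h : y ∈ Tf then g ⟨y, h⟩ else 0) ⊆ supp D := by
      intro y hy
      simp only [supp, Set.mem_setOf_eq] at hy ⊢
      by_contra hD0
      have hD0' : D y = 0 := by tauto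
      have hyT : y ∉ Tf := by rw [hmemT]; tauto
      simp [hyT] at hy
    have hux0 : (fun y => if h : y ∈ Tf then g ⟨y, h⟩ else 0) x0 = 0 := by simp [hx0T]
    have hu0 := hprop _ huker husupp hux0
    have : (fun y => if h : y ∈ Tf then g ⟨y, h⟩ else 0) (j : E) = 0 := by rw [hu0]; rfl
    simpa [j.2] using this
  obtain ⟨r, hrinj, hrunit⟩ := exists_invertible_rows _ hind
  have hrunit' : IsUnit (A.submatrix r (fun x : ↥Tf => (x : E))) := hrunit
  have hNc : (A.submatrix r (fun x : ↥Tf => (x : E))).mulVec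
      (fun x : ↥Tf => (D x0)⁻¹ * D (x : E)) = fun i => -(A (r i) x0) := by
    funext i
    have hkeri : ∑ y : E, A (r i) y * D y = 0 := by
      have := congrFun hker (r i)
      simpa [Matrix.mulVec, dotProduct] using this
    have hsplit : ∑ y ∈ Sf, A (r i) y * D y = 0 := by
      rw [← hkeri]
      apply Finset.sum_subset (Finset.subset_univ _)
      intro y _ hy
      have : D y = 0 := by by_contra h; exact hy ((hmemS y).mpr h)
      simp [this]
    have hins : Sf = insert x0 Tf := by rw [hTf, Finset.insert_erase hx0S]
    rw [hins, Finset.sum_insert (hTf ▸ Finset.notMem_erase _ _)] at hsplit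
    have hTsum : ∑ y ∈ Tf, A (r i) y * D y = -(A (r i) x0 * D x0) := by linarith
    show ∑ j : ↥Tf, A (r i) (j : E) * ((D x0)⁻¹ * D (j : E)) = -(A (r i) x0)
    have heq : ∑ j : ↥Tf, A (r i) (j : E) * ((D x0)⁻¹ * D (j : E))
        = (D x0)⁻¹ * ∑ y ∈ Tf, A (r i) y * D y := by
      rw [Finset.mul_sum, ← Finset.sum_coe_sort Tf (fun y => (D x0)⁻¹ * (A (r i) y * D y))]
      refine Finset.sum_congr rfl fun x _ => ?_
      ring
    rw [heq, hTsum]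
    field_simp
  have hcval := cramer_tu A hA Tf x0 r hrunit' _ hNc
  intro x
  by_cases hDx : D x = 0
  · right; left; simp [hDx]
  by_cases hxx0 : x = x0
  · right; right; subst hxx0; simp [Pi.smul_apply, inv_mul_cancel₀ hx0]
  have hxT : x ∈ Tf := (hmemT x).mpr ⟨hxx0, hDx⟩
  have hv := hcval ⟨x, hxT⟩
  show ((D x0)⁻¹ • D) x = -1 ∨ _ ∨ _
  simp only [Pi.smul_apply, smul_eq_mul]
  tauto

lemma exists_conformal_minimal {m E : Type*} [Fintype m] [Fintype E] (A : Matrix m E ℝ)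
    (v : E → ℝ) (hker : A.mulVec v = 0) (hv : v ≠ 0) :
    ∃ D : E → ℝ, A.mulVec D = 0 ∧ D ≠ 0 ∧ (∀ x, D x = 0 ∨ 0 < D x * v x) ∧
      (∀ u : E → ℝ, A.mulVec u = 0 → u ≠ 0 → supp u ⊆ supp D → supp u = supp D) := by
  have hex : ∃ n : ℕ, ∃ D : E → ℝ,
      (A.mulVec D = 0 ∧ D ≠ 0 ∧ (∀ x, D x = 0 ∨ 0 < D x * v x)) ∧ (supp D).ncard = n :=
    ⟨(supp v).ncard, v, ⟨hker, hv, fun x => by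
      rcases eq_or_ne (v x) 0 with h | h
      · exact Or.inl h
      · exact Or.inr (mul_self_pos.mpr h)⟩, rfl⟩
  obtain ⟨D, hDK, hDcard⟩ := Nat.find_spec hex
  obtain ⟨hDker, hDne, hDconf⟩ := hDK
  refine ⟨D, hDker, hDne, hDconf, ?_⟩
  intro u huker hune husupp
  by_contra hne
  have hssub : supp u ⊂ supp D := husupp.ssubset_of_ne hne
  obtain ⟨x3, hx3D, hx3u⟩ := Set.exists_of_ssubset hssub
  obtain ⟨x1, hx1⟩ : ∃ x1, u x1 ≠ 0 := by
    by_contra h; push_neg at h; exact hune (funext h)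
  have hx1D : D x1 ≠ 0 := husupp hx1
  set ε : ℝ := if 0 < D x1 * u x1 then 1 else -1 with hε
  have hεne : ε ≠ 0 := by rw [hε]; split <;> norm_num
  set u' : E → ℝ := fun x => ε * u x with hu'
  have hu'ker : A.mulVec u' = 0 := by
    have : u' = ε • u := rfl
    rw [this, Matrix.mulVec_smul, huker, smul_zero]
  have hu'zero : ∀ x, u' x = 0 ↔ u x = 0 := by
    intro x; rw [hu']; simp [hεne]
  have hx1u' : 0 < D x1 * u' x1 := by
    show 0 < D x1 * (ε * u x1)
    rw [hε]
    split
    · rename_i h; simpa using h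
    · rename_i h
      have h2 : D x1 * u x1 < 0 := lt_of_le_of_ne (not_lt.mp h) (mul_ne_zero hx1D hx1)
      nlinarith
  have hTu : x1 ∈ Finset.univ.filter (fun x => 0 < D x * u' x) := by
    simp [hx1u']
  obtain ⟨x2, hx2T, hx2min⟩ := Finset.exists_min_image
    (Finset.univ.filter (fun x => 0 < D x * u' x)) (fun x => D x / u' x) ⟨x1, hTu⟩
  have hx2pos : 0 < D x2 * u' x2 := by simpa using hx2T
  have hu'x2 : u' x2 ≠ 0 := fun h => by simp [h] at hx2pos
  have hDx2 : D x2 ≠ 0 := fun h => by simp [h] at hx2pos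
  set t : ℝ := D x2 / u' x2 with hts
  have ht : 0 < t := div_pos_iff.mpr (mul_pos_iff.mp hx2pos)
  -- the new vector
  set D' : E → ℝ := fun x => D x - t * u' x with hD'
  have hD'ker : A.mulVec D' = 0 := by
    have : D' = D - t • u' := rfl
    rw [this, Matrix.mulVec_sub, Matrix.mulVec_smul, hDker, hu'ker, smul_zero, sub_zero]
  have hzero_of : ∀ x, D x = 0 → D' x = 0 := by
    intro x hx
    have hux : u x = 0 := by
      by_contra h; exact husupp h hx
    show D x - t * u' x = 0
    rw [hx, (hu'zero x).mpr hux]; ring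
  have hD'x2 : D' x2 = 0 := by
    show D x2 - t * u' x2 = 0
    rw [hts]; field_simp; ring
  have hD'conf : ∀ x, D' x = 0 ∨ 0 < D' x * v x := by
    intro x
    by_cases hux : u' x = 0
    · have : D' x = D x := by show D x - t * u' x = D x; rw [hux]; ring
      rw [this]; exact hDconf x
    have hDx : D x ≠ 0 := by
      intro h
      exact hux ((hu'zero x).mpr (by by_contra hc; exact husupp hc h))
    have hvx : 0 < D x * v x := (hDconf x).resolve_left hDx
    have hDD : 0 < D x * D x := mul_self_pos.mpr hDx
    rcases lt_trichotomy (D x * u' x) 0 with hneg | h0 | hpos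
    · right
      have h2 : u' x * v x < 0 := by nlinarith
      show 0 < (D x - t * u' x) * v x
      nlinarith [mul_pos ht (neg_pos.mpr h2)]
    · exact absurd h0 (mul_ne_zero hDx hux)
    · have hle : t ≤ D x / u' x := hx2min x (by simp [hpos])
      have h2 : 0 < u' x * v x := by nlinarith
      rcases eq_or_ne (D' x) 0 with h | h
      · exact Or.inl h
      right
      replace h : D x - t * u' x ≠ 0 := h
      show 0 < (D x - t * u' x) * v x
      rcases lt_or_gt_of_ne hux with hu'neg | hu'pos
      · have h3 : D x ≤ t * u' x := by
          have := (le_div_iff_of_neg hu'neg).mp hle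
          linarith
        have hvneg : v x < 0 := by nlinarith
        have h4 : D x - t * u' x < 0 := by
          rcases lt_or_eq_of_le (sub_nonpos.mpr h3) with h5 | h5
          · exact h5
          · exact absurd h5 h
        exact mul_pos_of_neg_of_neg h4 hvneg
      · have h3 : t * u' x ≤ D x := by
          have := (le_div_iff₀ hu'pos).mp hle
          linarith
        have hvpos : 0 < v x := by nlinarith
        have h4 : 0 < D x - t * u' x := by
          rcases lt_or_eq_of_le (sub_nonneg.mpr h3) with h5 | h5
          · exact h5
          · exact absurd h5.symm h
        exact mul_pos h4 hvpos
  have hD'ne : D' ≠ 0 := by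
    intro h
    have hu'x3 : u' x3 = 0 := (hu'zero x3).mpr (by simpa [supp] using hx3u)
    have : D' x3 = D x3 := by show D x3 - t * u' x3 = D x3; rw [hu'x3]; ring
    rw [h] at this
    exact hx3D (by simpa [supp] using this.symm)
  have hsub : supp D' ⊂ supp D := by
    constructor
    · intro x hx
      simp only [supp, Set.mem_setOf_eq] at hx ⊢
      intro h; exact hx (hzero_of x h)
    · intro h
      have : x2 ∈ supp D' := h (by simpa [supp] using hDx2)
      exact this hD'x2
  have hlt : (supp D').ncard < (supp D).ncard := Set.ncard_lt_ncard hsub (Set.toFinite _)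
  have hge : Nat.find hex ≤ (supp D').ncard :=
    Nat.find_min' hex ⟨D', ⟨hD'ker, hD'ne, hD'conf⟩, rfl⟩
  omega

lemma exists_conformal_circuit {m E : Type*} [Fintype m] [Fintype E] (A : Matrix m E ℝ)
    (hA : A.IsTotallyUnimodular) (v : E → ℝ) (hker : A.mulVec v = 0) (hsimple : Simple v)
    (hv : v ≠ 0) :
    ∃ C : E → ℝ, SignedCircuit A C ∧ (∀ x, C x = 0 ∨ C x = v x) := by
  obtain ⟨D, hDker, hDne, hDconf, hDmin⟩ := exists_conformal_minimal A v hker hv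
  obtain ⟨x0, hx0⟩ : ∃ x0, D x0 ≠ 0 := by
    by_contra h; push_neg at h; exact hDne (funext h)
  have hconf0 : 0 < D x0 * v x0 := (hDconf x0).resolve_left hx0
  have hsD : Simple ((D x0)⁻¹ • D) := simple_of_minimal A hA D hDker hDmin x0 hx0
  have hvx0 : v x0 = 1 ∨ v x0 = -1 := by
    rcases hsimple x0 with h | h | h
    · exact Or.inr h
    · exfalso; rw [h] at hconf0; simp at hconf0
    · exact Or.inl h
  set C : E → ℝ := fun x => v x0 * ((D x0)⁻¹ * D x) with hC
  have hCx : ∀ x, C x = v x0 * ((D x0)⁻¹ * D x) := fun x => rfl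
  have hCzero : ∀ x, C x = 0 ↔ D x = 0 := by
    intro x
    rw [hCx]
    constructor
    · intro h
      rcases mul_eq_zero.mp h with h | h
      · exfalso; rcases hvx0 with h' | h' <;> rw [h'] at h <;> norm_num at h
      · rcases mul_eq_zero.mp h with h | h
        · exact absurd h (inv_ne_zero hx0)
        · exact h
    · intro h; rw [h]; ring
  have hCker : A.mulVec C = 0 := by
    have : C = v x0 • ((D x0)⁻¹ • D) := by
      funext x; simp only [hCx, Pi.smul_apply, smul_eq_mul]
    rw [this, Matrix.mulVec_smul, Matrix.mulVec_smul, hDker]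
    simp
  have hCsimple : Simple C := by
    intro x
    have := hsD x
    simp only [Pi.smul_apply, smul_eq_mul] at this
    rw [hCx]
    rcases hvx0 with h | h <;> rw [h] <;> rcases this with h' | h' | h' <;> rw [h'] <;> norm_num
  have hCne : C ≠ 0 := by
    intro h
    have := congrFun h x0
    rw [hCx, inv_mul_cancel₀ hx0, mul_one] at this
    rcases hvx0 with h' | h' <;> rw [h'] at this <;> norm_num at this
  have hsuppCD : supp C = supp D := by
    ext x
    simp only [supp, Set.mem_setOf_eq]
    exact not_iff_not.mpr (hCzero x)
  refine ⟨C, ⟨hCker, hCne, hCsimple, ?_⟩, ?_⟩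
  · intro u hu hune hsub
    rw [hsuppCD] at hsub ⊢
    exact hDmin u hu hune hsub
  · intro x
    by_cases hDx : D x = 0
    · exact Or.inl ((hCzero x).mpr hDx)
    right
    have hCxne : C x ≠ 0 := fun h => hDx ((hCzero x).mp h)
    have hconfx : 0 < D x * v x := (hDconf x).resolve_left hDx
    have hpos0 : 0 < v x0 * (D x0)⁻¹ := by
      rcases mul_pos_iff.mp hconf0 with ⟨h1, h2⟩ | ⟨h1, h2⟩
      · exact mul_pos h2 (inv_pos.mpr h1)
      · exact mul_pos_of_neg_of_neg h2 (inv_lt_zero.mpr h1)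
    have hCv : 0 < C x * v x := by
      rw [hCx]
      nlinarith
    have hvx : v x = 1 ∨ v x = -1 := by
      rcases hsimple x with h | h | h
      · exact Or.inr h
      · exfalso; rw [h] at hCv; simp at hCv
      · exact Or.inl h
    rcases hCsimple x with h1 | h1 | h1 <;> rcases hvx with h2 | h2 <;>
      rw [h1, h2] at hCv ⊢ <;> first | rfl | (exfalso; norm_num at hCv) | (exact absurd h1 hCxne)

lemma decompose_aux {m E : Type*} [Fintype m] [Fintype E] (A : Matrix m E ℝ)
    (hA : A.IsTotallyUnimodular) :
    ∀ N : ℕ, ∀ v : E → ℝ, (supp v).ncard ≤ N → A.mulVec v = 0 → Simple v →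
      ∃ (n : ℕ) (c : Fin n → (E → ℝ)),
        (∀ i, SignedCircuit A (c i)) ∧
        (Pairwise fun i j => supp (c i) ∩ supp (c j) = ∅) ∧
        (∀ i, ∀ x, c i x = 0 ∨ c i x = v x) ∧
        (⋃ i, supp (c i)) = supp v := by
  intro N
  induction N with
  | zero =>
    intro v hcard hker hsimple
    have hv0 : v = 0 := by
      by_contra h
      obtain ⟨x, hx⟩ : ∃ x, v x ≠ 0 := by
        by_contra h'; push_neg at h'; exact h (funext h')
      have : (supp v).Nonempty := ⟨x, hx⟩
      have := Set.ncard_pos (Set.toFinite (supp v)) |>.mpr this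
      omega
    refine ⟨0, fun i => i.elim0, fun i => i.elim0, ?_, fun i => i.elim0, ?_⟩
    · intro i; exact i.elim0
    · rw [hv0]
      simp [supp]
  | succ N ih =>
    intro v hcard hker hsimple
    by_cases hv0 : v = 0
    · refine ⟨0, fun i => i.elim0, fun i => i.elim0, ?_, fun i => i.elim0, ?_⟩
      · intro i; exact i.elim0
      · rw [hv0]; simp [supp]
    obtain ⟨C, hCcirc, hCconf⟩ := exists_conformal_circuit A hA v hker hsimple hv0
    obtain ⟨hCker, hCne, hCsimple, hCmin⟩ := hCcirc
    set v' : E → ℝ := fun x => v x - C x with hv'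
    have hv'x : ∀ x, v' x = v x - C x := fun _ => rfl
    have ha : ∀ x, C x ≠ 0 → v' x = 0 := by
      intro x hx
      rw [hv'x, (hCconf x).resolve_left hx, sub_self]
    have hb : ∀ x, C x = 0 → v' x = v x := by
      intro x hx; rw [hv'x, hx, sub_zero]
    have hv'ker : A.mulVec v' = 0 := by
      have : v' = v - C := rfl
      rw [this, Matrix.mulVec_sub, hker, hCker, sub_zero]
    have hv'simple : Simple v' := by
      intro x
      rcases eq_or_ne (C x) 0 with h | h
      · rw [hb x h]; exact hsimple x
      · rw [ha x h]; right; left; rfl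
    have hsuppv' : supp v' = supp v \ supp C := by
      ext x
      simp only [supp, Set.mem_setOf_eq, Set.mem_diff]
      constructor
      · intro h
        have hCx : C x = 0 := by by_contra h'; exact h (ha x h')
        rw [hb x hCx] at h
        exact ⟨h, fun h' => h' hCx⟩
      · rintro ⟨h1, h2⟩
        have hCx : C x = 0 := by by_contra h'; exact h2 h'
        rw [hb x hCx]
        exact h1
    have hsuppCv : supp C ⊆ supp v := by
      intro x hx
      simp only [supp, Set.mem_setOf_eq] at hx ⊢
      intro h
      rcases hCconf x with h' | h'
      · exact hx h'
      · rw [h] at h'; exact hx h'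
    obtain ⟨xC, hxC⟩ : ∃ x, C x ≠ 0 := by
      by_contra h; push_neg at h; exact hCne (funext h)
    have hss : supp v' ⊂ supp v := by
      rw [hsuppv']
      refine ⟨Set.diff_subset, fun h => ?_⟩
      have : xC ∈ supp v \ supp C := h (hsuppCv hxC)
      exact this.2 hxC
    have hcard' : (supp v').ncard ≤ N := by
      have := Set.ncard_lt_ncard hss (Set.toFinite _)
      omega
    obtain ⟨n, c, hcirc, hdisj, hconf, hunion⟩ := ih v' hcard' hv'ker hv'simple
    refine ⟨n + 1, Fin.cons C c, ?_, ?_, ?_, ?_⟩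
    · intro i
      refine Fin.cases ?_ ?_ i
      · rw [Fin.cons_zero]; exact ⟨hCker, hCne, hCsimple, hCmin⟩
      · intro j; rw [Fin.cons_succ]; exact hcirc j
    · have hdisjCv : ∀ j, supp C ∩ supp (c j) = ∅ := by
        intro j
        have hsub : supp (c j) ⊆ supp v' := by
          rw [← hunion]; exact Set.subset_iUnion (fun i => supp (c i)) j
        ext x
        simp only [Set.mem_inter_iff, Set.mem_empty_iff_false, iff_false, not_and]
        intro hx1 hx2
        have := hsub hx2
        rw [hsuppv'] at this
        exact this.2 hx1
      intro i j hij
      rcases Fin.eq_zero_or_eq_succ i with hi | ⟨i', hi⟩ <;>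
        rcases Fin.eq_zero_or_eq_succ j with hj | ⟨j', hj⟩ <;> subst hi <;> subst hj
      · exact absurd rfl hij
      · simp only [Fin.cons_zero, Fin.cons_succ]; exact hdisjCv j'
      · simp only [Fin.cons_zero, Fin.cons_succ]; rw [Set.inter_comm]; exact hdisjCv i'
      · simp only [Fin.cons_succ]
        exact hdisj (fun h => hij (congrArg Fin.succ h))
    · intro i x
      refine Fin.cases ?_ ?_ i
      · rw [Fin.cons_zero]; exact hCconf x
      · intro j
        rw [Fin.cons_succ]
        rcases hconf j x with h | h
        · exact Or.inl h
        rcases eq_or_ne (v' x) 0 with h0 | h0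
        · exact Or.inl (h.trans h0)
        have hCx : C x = 0 := by
          by_contra h'
          exact h0 (ha x h')
        rw [h, hb x hCx]
        exact Or.inr rfl
    · ext x
      simp only [Set.mem_iUnion]
      constructor
      · rintro ⟨i, hi⟩
        rcases Fin.eq_zero_or_eq_succ i with h | ⟨i', h⟩ <;> subst h
        · rw [Fin.cons_zero] at hi; exact hsuppCv hi
        · rw [Fin.cons_succ] at hi
          have : x ∈ supp v' := by rw [← hunion]; exact Set.mem_iUnion.mpr ⟨i', hi⟩
          rw [hsuppv'] at this; exact this.1
      · intro hx
        by_cases hCx : C x = 0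
        · have : x ∈ supp v' := by rw [hsuppv']; exact ⟨hx, fun h => h hCx⟩
          rw [← hunion] at this
          obtain ⟨i, hi⟩ := Set.mem_iUnion.mp this
          exact ⟨i.succ, by rw [Fin.cons_succ]; exact hi⟩
        · exact ⟨0, by rw [Fin.cons_zero]; exact hCx⟩

theorem circuit_reversal_sequence_reduces_to_disjoint_reversals
    {m E : Type*} [Fintype m] [Fintype E] (A : Matrix m E ℝ)
    (hA : A.IsTotallyUnimodular) (O O' : E → ℝ)
    (hO : ∀ x, O x = 1 ∨ O x = -1)
    (k : ℕ) (Os : ℕ → (E → ℝ)) (Cs : ℕ → (E → ℝ))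
    (h0 : Os 0 = O) (hk : Os k = O')
    (hstep : ∀ i < k, SignedCircuit A (Cs i) ∧
      (∀ x, Cs i x = 0 ∨ Cs i x = Os i x) ∧
      Os (i + 1) = fun x => if x ∈ supp (Cs i) then -(Os i x) else Os i x) :
    ∃ (n : ℕ) (c : Fin n → (E → ℝ)),
      (∀ i, SignedCircuit A (c i)) ∧
      (Pairwise fun i j => supp (c i) ∩ supp (c j) = ∅) ∧
      (∀ i, ∀ x, c i x = 0 ∨ c i x = O x) ∧
      O' = fun x => if x ∈ ⋃ i, supp (c i) then -(O x) else O x := by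
  -- invariant along the sequence
  have key : ∀ j, j ≤ k → (∀ x, Os j x = 1 ∨ Os j x = -1) ∧
      A.mulVec (fun x => (O x - Os j x) / 2) = 0 := by
    intro j
    induction j with
    | zero =>
      intro _
      refine ⟨by rw [h0]; exact hO, ?_⟩
      have : (fun x => (O x - Os 0 x) / 2) = 0 := by
        funext x; rw [h0]; show (O x - O x) / 2 = (0 : E → ℝ) x; simp
      rw [this, Matrix.mulVec_zero]
    | succ j ihj =>
      intro hjk
      obtain ⟨hpm, hkerj⟩ := ihj (by omega)
      obtain ⟨hcirc, hcompat, hformula⟩ := hstep j (by omega)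
      constructor
      · intro x
        rw [hformula]
        by_cases hx : x ∈ supp (Cs j)
        · simp only [hx, if_true]
          rcases hpm x with h | h <;> rw [h] <;> [right; left] <;> norm_num
        · simp only [hx, if_false]
          exact hpm x
      · have heq : (fun x => (O x - Os (j+1) x) / 2)
            = (fun x => (O x - Os j x) / 2) + Cs j := by
          funext x
          rw [hformula]
          by_cases hx : x ∈ supp (Cs j)
          · simp only [hx, if_true, Pi.add_apply]
            have hCx : Cs j x = Os j x := by
              rcases hcompat x with h | h
              · exact absurd h hx
              · exact h
            rw [hCx]; ring
          · have hCx : Cs j x = 0 := by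
              by_contra h; exact hx h
            simp only [hx, if_false, Pi.add_apply, hCx]; ring
        rw [heq, Matrix.mulVec_add, hkerj, hcirc.1, add_zero]
  obtain ⟨hO'pm, hvker⟩ := key k le_rfl
  rw [hk] at hO'pm hvker
  -- the difference vector
  have hvsimple : Simple (fun x => (O x - O' x) / 2) := by
    intro x
    show (O x - O' x) / 2 = -1 ∨ (O x - O' x) / 2 = 0 ∨ (O x - O' x) / 2 = 1
    rcases hO x with h1 | h1 <;> rcases hO'pm x with h2 | h2 <;> rw [h1, h2] <;> norm_num
  obtain ⟨n, c, hcirc, hdisj, hconf, hunion⟩ :=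
    decompose_aux A hA (supp (fun x => (O x - O' x) / 2)).ncard _ le_rfl hvker hvsimple
  refine ⟨n, c, hcirc, hdisj, ?_, ?_⟩
  · intro i x
    rcases hconf i x with h | h
    · exact Or.inl h
    rcases eq_or_ne ((O x - O' x) / 2) 0 with h0 | h0
    · exact Or.inl (h.trans h0)
    have hOO' : O' x = -(O x) := by
      rcases hO x with h1 | h1 <;> rcases hO'pm x with h2 | h2 <;> rw [h1, h2] at h0 ⊢ <;>
        norm_num at h0 <;> norm_num
    right
    rw [h, hOO']; ring
  · funext x
    by_cases hx : x ∈ ⋃ i, supp (c i)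
    · simp only [hx, if_true]
      rw [hunion] at hx
      have h0 : (O x - O' x) / 2 ≠ 0 := hx
      rcases hO x with h1 | h1 <;> rcases hO'pm x with h2 | h2 <;> rw [h1, h2] at h0 ⊢ <;>
        norm_num at h0 <;> norm_num
    · simp only [hx, if_false]
      rw [hunion] at hx
      have h0 : (O x - O' x) / 2 = 0 := by
        by_contra h; exact hx h
      linarith
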